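/- For every real q with 0 < q < 1 and every real x > -q^{-1/2}, one has θ(q,x) > 1/2. -/

import Mathlib

open Real MeasureTheory Filter
open scoped Topology

/-- The partial theta function `θ(q,x) = ∑_{j=0}^∞ q^(j(j+1)/2) x^j`. -/
noncomputable def theta (q x : ℝ) : ℝ := ∑' j : ℕ, q ^ (j * (j + 1) / 2) * x ^ j

namespace ThetaAux

lemma gauss_pt {a : ℝ} (ha : 0 < a) (j : ℤ) :
    ∫ x : ℝ, Complex.exp (Complex.I * (2 * π * j) * x) *
      Complex.exp (-((π ^ 2 / a : ℝ) : ℂ) * x ^ 2) =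
    ((Real.sqrt (a / π) * Real.exp (-(a * (j : ℝ) ^ 2)) : ℝ) : ℂ) := by
  have hc : (0:ℝ) < π ^ 2 / a := div_pos (by positivity) ha
  have hπ : ((π:ℝ) : ℂ) ≠ 0 := Complex.ofReal_ne_zero.mpr pi_ne_zero
  have ha' : ((a:ℝ) : ℂ) ≠ 0 := Complex.ofReal_ne_zero.mpr ha.ne'
  have h := fourierIntegral_gaussian (b := ((π ^ 2 / a : ℝ) : ℂ))
    (show (0:ℝ) < (((π ^ 2 / a : ℝ) : ℂ)).re by rw [Complex.ofReal_re]; exact hc) ((2 * π * j : ℝ) : ℂ)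
  rw [show ((2 * π * (j:ℝ) : ℝ) : ℂ) = 2 * π * (j:ℤ) by push_cast; ring] at h
  rw [h]
  have h1 : ((π : ℂ) / ((π ^ 2 / a : ℝ) : ℂ)) = ((a / π : ℝ) : ℂ) := by
    push_cast
    field_simp [hπ, ha']
  have h2 : (-(2 * (π:ℂ) * (j:ℤ)) ^ 2 / (4 * ((π ^ 2 / a : ℝ) : ℂ))) =
      ((-(a * (j : ℝ) ^ 2) : ℝ) : ℂ) := by
    push_cast
    field_simp [hπ, ha']
    ring
  rw [h1, h2]
  rw [show ((1:ℂ)/2) = ((1/2 : ℝ) : ℂ) by norm_num]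
  rw [← Complex.ofReal_cpow (le_of_lt (div_pos ha pi_pos)) (1/2)]
  rw [← Complex.ofReal_exp, ← Complex.ofReal_mul]
  norm_cast
  rw [Real.sqrt_eq_rpow]


noncomputable def uK (w x : ℝ) : ℂ := -((w : ℂ) * Complex.exp (2 * π * x * Complex.I))

noncomputable def FK (c w : ℝ) (j : ℤ) (x : ℝ) : ℂ :=
  (-1 : ℂ) ^ j.natAbs * (w : ℂ) ^ j.natAbs *
    (Complex.exp (Complex.I * (2 * π * j) * x) * Complex.exp (-(c : ℂ) * x ^ 2))

noncomputable def phiK (w x : ℝ) : ℝ := (1 - w ^ 2) / Complex.normSq (1 - uK w x)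

variable {a c w : ℝ}

lemma re_ofReal_mul_I_eq_zero (t : ℝ) : ((t : ℂ) * Complex.I).re = 0 := by
  simp

lemma uK_norm (hw0 : 0 < w) (x : ℝ) : ‖uK w x‖ = w := by
  rw [uK]
  simp only [norm_neg, norm_mul, Complex.norm_exp, Complex.norm_real, Real.norm_eq_abs]
  have : ((2:ℂ) * π * x * Complex.I).re = 0 := by
    have : ((2:ℂ) * π * x * Complex.I) = ((2 * π * x : ℝ) : ℂ) * Complex.I := by push_cast; ring
    rw [this, re_ofReal_mul_I_eq_zero]
  rw [this, Real.exp_zero, abs_of_pos hw0, mul_one]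

lemma one_sub_uK_ne (hw0 : 0 < w) (hw1 : w < 1) (x : ℝ) : (1 : ℂ) - uK w x ≠ 0 := by
  intro h
  have h2 : uK w x = 1 := by linear_combination -h
  have := uK_norm hw0 x
  rw [h2] at this
  simp at this
  linarith

lemma normSq_uK_pos (hw0 : 0 < w) (hw1 : w < 1) (x : ℝ) :
    0 < Complex.normSq (1 - uK w x) :=
  Complex.normSq_pos.mpr (one_sub_uK_ne hw0 hw1 x)

lemma normSq_uK_le (hw0 : 0 < w) (x : ℝ) :
    Complex.normSq (1 - uK w x) ≤ (1 + w) ^ 2 := by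
  rw [Complex.normSq_eq_norm_sq]
  have h : ‖(1:ℂ) - uK w x‖ ≤ 1 + w := by
    calc ‖(1:ℂ) - uK w x‖ ≤ ‖(1:ℂ)‖ + ‖uK w x‖ := norm_sub_le _ _
    _ = 1 + w := by rw [norm_one, uK_norm hw0]
  have h0 : (0:ℝ) ≤ ‖(1:ℂ) - uK w x‖ := norm_nonneg _
  nlinarith

lemma normSq_uK_ge (hw0 : 0 < w) (hw1 : w < 1) (x : ℝ) :
    (1 - w) ^ 2 ≤ Complex.normSq (1 - uK w x) := by
  rw [Complex.normSq_eq_norm_sq]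
  have h : 1 - w ≤ ‖(1:ℂ) - uK w x‖ := by
    have := norm_sub_norm_le (1:ℂ) (uK w x)
    rw [norm_one, uK_norm hw0] at this
    exact this
  nlinarith [norm_nonneg ((1:ℂ) - uK w x)]

lemma phiK_ge (hw0 : 0 < w) (hw1 : w < 1) (x : ℝ) : (1 - w) / (1 + w) ≤ phiK w x := by
  have h1 : (1 - w) / (1 + w) = (1 - w ^ 2) / (1 + w) ^ 2 := by
    rw [div_eq_div_iff (by linarith) (by nlinarith)]
    ring
  rw [h1, phiK]
  exact div_le_div_of_nonneg_left (by nlinarith) (normSq_uK_pos hw0 hw1 x) (normSq_uK_le hw0 x)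

lemma phiK_le (hw0 : 0 < w) (hw1 : w < 1) (x : ℝ) : phiK w x ≤ (1 - w ^ 2) / (1 - w) ^ 2 := by
  rw [phiK]
  exact div_le_div_of_nonneg_left (by nlinarith) (by nlinarith) (normSq_uK_ge hw0 hw1 x)

lemma phiK_pos (hw0 : 0 < w) (hw1 : w < 1) (x : ℝ) : 0 < phiK w x :=
  lt_of_lt_of_le (div_pos (by linarith) (by linarith)) (phiK_ge hw0 hw1 x)

lemma phiK_continuous (hw0 : 0 < w) (hw1 : w < 1) : Continuous (phiK w) := by
  apply Continuous.div continuous_const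
  · apply Complex.continuous_normSq.comp
    apply Continuous.sub continuous_const
    apply Continuous.neg
    apply Continuous.mul continuous_const
    apply Complex.continuous_exp.comp
    fun_prop
  · intro x
    exact (normSq_uK_pos hw0 hw1 x).ne'

lemma FK_integrable (hc : 0 < c) (j : ℤ) : Integrable (fun x : ℝ => FK c w j x) := by
  have hcre : (0:ℝ) < (((c:ℝ) : ℂ)).re := by rw [Complex.ofReal_re]; exact hc
  have heq : (fun x : ℝ => FK c w j x) = fun x : ℝ =>
      ((-1 : ℂ) ^ j.natAbs * (w : ℂ) ^ j.natAbs) *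
      Complex.exp (-((c:ℝ):ℂ) * x ^ 2 + (Complex.I * (2 * π * j)) * x + 0) := by
    funext x
    rw [FK, add_zero, Complex.exp_add]
    ring
  rw [heq]
  exact (integrable_cexp_quadratic hcre _ _).const_mul _

lemma FK_norm (hw0 : 0 < w) (j : ℤ) (x : ℝ) :
    ‖FK c w j x‖ = w ^ j.natAbs * Real.exp (-c * x ^ 2) := by
  rw [FK]
  simp only [norm_mul, norm_pow, norm_neg, norm_one, one_pow, Complex.norm_exp,
    Complex.norm_real, Real.norm_eq_abs]
  have h1 : (Complex.I * (2 * π * (j:ℤ)) * x).re = 0 := by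
    have : (Complex.I * (2 * π * (j:ℤ)) * (x:ℂ)) = ((2 * π * j * x : ℝ) : ℂ) * Complex.I := by
      push_cast; ring
    rw [this, re_ofReal_mul_I_eq_zero]
  have h2 : (-((c:ℝ):ℂ) * (x:ℂ) ^ 2).re = -c * x ^ 2 := by
    have : (-((c:ℝ):ℂ) * (x:ℂ) ^ 2) = ((-c * x ^ 2 : ℝ) : ℂ) := by push_cast; ring
    rw [this, Complex.ofReal_re]
  rw [h1, h2, Real.exp_zero, abs_of_pos hw0]
  ring

lemma FK_hasSum_pt (hc : 0 < c) (hw0 : 0 < w) (hw1 : w < 1) (x : ℝ) :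
    HasSum (fun j : ℤ => FK c w j x) ((Real.exp (-c * x ^ 2) * phiK w x : ℝ) : ℂ) := by
  set G : ℂ := Complex.exp (-((c:ℝ):ℂ) * x ^ 2) with hG
  set u : ℂ := uK w x with hu
  have hug : ‖u‖ < 1 := by rw [hu, uK_norm hw0]; exact hw1
  have hgeo := hasSum_geometric_of_norm_lt_one hug
  set v : ℂ := (starRingEnd ℂ) u with hv
  have hvnorm : ‖v‖ < 1 := by rw [hv, RCLike.norm_conj]; exact hug
  have hgeov := hasSum_geometric_of_norm_lt_one hvnorm
  have hu1 : (1:ℂ) - u ≠ 0 := one_sub_uK_ne hw0 hw1 x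
  have hv1 : (1:ℂ) - v ≠ 0 := by
    have h : (1:ℂ) - v = (starRingEnd ℂ) (1 - u) := by rw [hv, map_sub, map_one]
    rw [h, starRingEnd_apply]
    exact star_ne_zero.mpr hu1
  have hconjarg : (starRingEnd ℂ) (2 * (π:ℂ) * (x:ℝ) * Complex.I) =
      (-(2 * π * x) : ℝ) * Complex.I := by
    have : (2 * (π:ℂ) * (x:ℝ) * Complex.I) = ((2 * π * x : ℝ) : ℂ) * Complex.I := by
      push_cast; ring
    rw [this, map_mul, Complex.conj_ofReal, Complex.conj_I]
    push_cast
    ring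
  have hvexp : v = -((w:ℂ) * Complex.exp (((-(2 * π * x) : ℝ) : ℂ) * Complex.I)) := by
    rw [hv, hu, uK, map_neg, map_mul, Complex.conj_ofReal, ← Complex.exp_conj, hconjarg]
  have h1 : HasSum (fun n : ℕ => FK c w (n : ℤ) x) ((1 - u)⁻¹ * G) := by
    have heq : (fun n : ℕ => FK c w (n : ℤ) x) = fun n : ℕ => u ^ n * G := by
      funext n
      rw [FK, hu, uK, hG]
      have hna : ((n : ℤ)).natAbs = n := by omega
      rw [hna]
      have hch : Complex.exp (Complex.I * (2 * π * ((n:ℤ) : ℂ)) * x)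
          = Complex.exp (2 * π * x * Complex.I) ^ n := by
        rw [← Complex.exp_nat_mul]
        congr 1
        push_cast
        ring
      rw [hch]
      ring
    rw [heq]
    exact hgeo.mul_right G
  have h2 : HasSum (fun n : ℕ => FK c w (-((n : ℤ) + 1)) x) (v * (1 - v)⁻¹ * G) := by
    have heq : (fun n : ℕ => FK c w (-((n : ℤ) + 1)) x) = fun n : ℕ => v ^ (n + 1) * G := by
      funext n
      rw [FK, hG, hvexp]
      have hna : (-((n : ℤ) + 1)).natAbs = n + 1 := by omega
      rw [hna]
      have hch : Complex.exp (Complex.I * (2 * π * (((-((n : ℤ) + 1)) : ℤ) : ℂ)) * x)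
          = Complex.exp (((-(2 * π * x) : ℝ) : ℂ) * Complex.I) ^ (n + 1) := by
        rw [← Complex.exp_nat_mul]
        congr 1
        push_cast
        ring
      rw [hch]
      ring
    rw [heq]
    have := (hgeov.mul_left v).mul_right G
    have heq2 : (fun n : ℕ => v * v ^ n * G) = fun n : ℕ => v ^ (n + 1) * G := by
      funext n
      rw [pow_succ]
      ring
    rwa [heq2] at this
  have hsum := HasSum.of_nat_of_neg_add_one (f := fun j : ℤ => FK c w j x) h1 h2
  have huv : u * v = ((w ^ 2 : ℝ) : ℂ) := by
    rw [hv, Complex.mul_conj, Complex.normSq_eq_norm_sq, hu, uK_norm hw0]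
  have hDof : ((Complex.normSq (1 - uK w x) : ℝ) : ℂ) = (1 - u) * (1 - v) := by
    have : (1:ℂ) - v = (starRingEnd ℂ) (1 - u) := by
      rw [hv, map_sub, map_one]
    rw [this, Complex.mul_conj, hu]
  have halg : (1 - u)⁻¹ * G + v * (1 - v)⁻¹ * G
      = ((Real.exp (-c * x ^ 2) * phiK w x : ℝ) : ℂ) := by
    have hGof : G = ((Real.exp (-c * x ^ 2) : ℝ) : ℂ) := by
      rw [hG, Complex.ofReal_exp]
      norm_cast
    have hfrac : (1 - u)⁻¹ + v * (1 - v)⁻¹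
        = ((1 - w ^ 2 : ℝ) : ℂ) / ((Complex.normSq (1 - uK w x) : ℝ) : ℂ) := by
      rw [hDof]
      field_simp
      push_cast at huv ⊢
      linear_combination -huv
    have : (1 - u)⁻¹ * G + v * (1 - v)⁻¹ * G = ((1 - u)⁻¹ + v * (1 - v)⁻¹) * G := by ring
    rw [this, hfrac, hGof, phiK]
    push_cast
    ring
  rw [← halg]
  exact hsum

lemma FK_integral (ha : 0 < a) (hw0 : 0 < w) (j : ℤ) :
    ∫ x : ℝ, FK (π ^ 2 / a) w j x =
      ((Real.sqrt (a / π) *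
        ((-1 : ℝ) ^ j.natAbs * Real.exp (-(a * (j : ℝ) ^ 2)) * w ^ j.natAbs) : ℝ) : ℂ) := by
  have : (fun x : ℝ => FK (π ^ 2 / a) w j x) = fun x : ℝ =>
      ((-1 : ℂ) ^ j.natAbs * (w : ℂ) ^ j.natAbs) *
      (Complex.exp (Complex.I * (2 * π * j) * x) *
        Complex.exp (-((π ^ 2 / a : ℝ) : ℂ) * x ^ 2)) := by
    funext x
    rw [FK]
  rw [this, integral_const_mul, gauss_pt ha j]
  push_cast
  ring

lemma key (ha : 0 < a) (hw0 : 0 < w) (hw1 : w < 1) :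
    ∃ T : ℝ, HasSum (fun j : ℤ =>
        (-1 : ℝ) ^ j.natAbs * Real.exp (-(a * (j : ℝ) ^ 2)) * w ^ j.natAbs) T ∧
      (1 - w) / (1 + w) ≤ T := by
  have hc : (0:ℝ) < π ^ 2 / a := div_pos (by positivity) ha
  set c : ℝ := π ^ 2 / a with hcdef
  -- summability of integrals of norms
  have hwsum : Summable (fun j : ℤ => w ^ j.natAbs) := by
    apply Summable.of_nat_of_neg <;>
    · apply Summable.congr (summable_geometric_of_lt_one hw0.le hw1)
      intro n
      congr 1
      try omega
  have hFnorm : Summable (fun j : ℤ => ∫ x : ℝ, ‖FK c w j x‖) := by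
    have : (fun j : ℤ => ∫ x : ℝ, ‖FK c w j x‖)
        = fun j : ℤ => w ^ j.natAbs * ∫ x : ℝ, Real.exp (-c * x ^ 2) := by
      funext j
      simp_rw [FK_norm hw0 j]
      exact integral_const_mul _ _
    rw [this]
    exact hwsum.mul_right _
  have hswap := hasSum_integral_of_summable_integral_norm
    (fun j => FK_integrable hc j) hFnorm
  -- identify the integrand
  have hptsum : (fun x : ℝ => ∑' j : ℤ, FK c w j x)
      = fun x : ℝ => ((Real.exp (-c * x ^ 2) * phiK w x : ℝ) : ℂ) := by
    funext x
    exact (FK_hasSum_pt hc hw0 hw1 x).tsum_eq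
  rw [hptsum] at hswap
  have hio : (∫ x : ℝ, ((Real.exp (-c * x ^ 2) * phiK w x : ℝ) : ℂ))
      = (((∫ x : ℝ, Real.exp (-c * x ^ 2) * phiK w x) : ℝ) : ℂ) := integral_ofReal
  rw [hio] at hswap
  set R : ℝ := ∫ x : ℝ, Real.exp (-c * x ^ 2) * phiK w x with hR
  -- identify the terms
  have hterms : (fun j : ℤ => ∫ x : ℝ, FK c w j x) = fun j : ℤ =>
      ((Real.sqrt (a / π) *
        ((-1 : ℝ) ^ j.natAbs * Real.exp (-(a * (j : ℝ) ^ 2)) * w ^ j.natAbs) : ℝ) : ℂ) := by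
    funext j
    exact FK_integral ha hw0 j
  rw [hterms] at hswap
  have hreal := Complex.hasSum_ofReal.mp hswap
  have hK : (0:ℝ) < Real.sqrt (a / π) := Real.sqrt_pos.mpr (div_pos ha pi_pos)
  -- divide by the constant
  have hdiv : HasSum (fun j : ℤ =>
      (-1 : ℝ) ^ j.natAbs * Real.exp (-(a * (j : ℝ) ^ 2)) * w ^ j.natAbs)
      (R / Real.sqrt (a / π)) := by
    have h2 := hreal.mul_left (Real.sqrt (a / π))⁻¹
    have heq : (fun j : ℤ => (Real.sqrt (a / π))⁻¹ * (Real.sqrt (a / π) *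
        ((-1 : ℝ) ^ j.natAbs * Real.exp (-(a * (j : ℝ) ^ 2)) * w ^ j.natAbs)))
        = fun j : ℤ => (-1 : ℝ) ^ j.natAbs * Real.exp (-(a * (j : ℝ) ^ 2)) * w ^ j.natAbs := by
      funext j
      field_simp
    rw [heq] at h2
    rw [div_eq_inv_mul]
    exact h2
  refine ⟨R / Real.sqrt (a / π), hdiv, ?_⟩
  -- lower bound on R
  have hsqrt_eq : Real.sqrt (π / c) = Real.sqrt (a / π) := by
    congr 1
    rw [hcdef]
    field_simp
  have hgauss_int : Integrable (fun x : ℝ => Real.exp (-c * x ^ 2)) :=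
    integrable_exp_neg_mul_sq hc
  have hψ_cont : Continuous (fun x : ℝ => Real.exp (-c * x ^ 2) * phiK w x) := by
    apply Continuous.mul
    · apply Real.continuous_exp.comp
      fun_prop
    · exact phiK_continuous hw0 hw1
  have hψ_int : Integrable (fun x : ℝ => Real.exp (-c * x ^ 2) * phiK w x) := by
    set M : ℝ := (1 - w ^ 2) / (1 - w) ^ 2 with hM
    have hM0 : 0 < M := by
      rw [hM]
      apply div_pos (by nlinarith) (by nlinarith)
    apply Integrable.mono (hgauss_int.const_mul M) hψ_cont.aestronglyMeasurable
    filter_upwards with x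
    rw [Real.norm_eq_abs, Real.norm_eq_abs]
    have h1 : 0 < phiK w x := phiK_pos hw0 hw1 x
    have h2 : phiK w x ≤ M := phiK_le hw0 hw1 x
    have h3 : (0:ℝ) < Real.exp (-c * x ^ 2) := Real.exp_pos _
    rw [abs_of_pos (mul_pos h3 h1), abs_of_pos (mul_pos hM0 h3)]
    calc Real.exp (-c * x ^ 2) * phiK w x ≤ Real.exp (-c * x ^ 2) * M := by nlinarith
    _ = M * Real.exp (-c * x ^ 2) := by ring
  have hRlb : (1 - w) / (1 + w) * Real.sqrt (π / c) ≤ R := by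
    have hmono : ∫ x : ℝ, (1 - w) / (1 + w) * Real.exp (-c * x ^ 2)
        ≤ ∫ x : ℝ, Real.exp (-c * x ^ 2) * phiK w x := by
      apply integral_mono (hgauss_int.const_mul _) hψ_int
      intro x
      have h1 := phiK_ge hw0 hw1 x
      have h3 : (0:ℝ) < Real.exp (-c * x ^ 2) := Real.exp_pos _
      calc (1 - w) / (1 + w) * Real.exp (-c * x ^ 2)
          ≤ phiK w x * Real.exp (-c * x ^ 2) := by nlinarith
      _ = Real.exp (-c * x ^ 2) * phiK w x := by ring
    rw [integral_const_mul, integral_gaussian] at hmono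
    exact hmono
  rw [hsqrt_eq] at hRlb
  rw [le_div_iff₀ hK]
  linarith

lemma key_nat (ha : 0 < a) (hw0 : 0 < w) (hw1 : w < 1) :
    ∃ S : ℝ, HasSum (fun n : ℕ =>
        (-1 : ℝ) ^ n * Real.exp (-(a * (n : ℝ) ^ 2)) * w ^ n) S ∧ 1 / (1 + w) ≤ S := by
  obtain ⟨T, hT, hTle⟩ := key ha hw0 hw1
  set f : ℤ → ℝ := fun j =>
    (-1 : ℝ) ^ j.natAbs * Real.exp (-(a * (j : ℝ) ^ 2)) * w ^ j.natAbs with hf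
  have hfN : ∀ n : ℕ, f (n : ℤ) = (-1 : ℝ) ^ n * Real.exp (-(a * (n : ℝ) ^ 2)) * w ^ n := by
    intro n
    simp only [hf]
    rw [show ((n : ℤ)).natAbs = n by omega]
    norm_num
  have hsumN : Summable (fun n : ℕ => f (n : ℤ)) :=
    hT.summable.comp_injective (fun a b h => by omega)
  set S : ℝ := ∑' n : ℕ, f (n : ℤ) with hS
  have hSsum : HasSum (fun n : ℕ => f (n : ℤ)) S := hsumN.hasSum
  have hshift : HasSum (fun n : ℕ => f ((n : ℤ) + 1)) (S - f 0) := by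
    have h0 : HasSum (fun n : ℕ => f (n : ℤ))
        ((S - f 0) + ∑ i ∈ Finset.range 1, f (i : ℤ)) := by
      simpa using hSsum
    have h := (hasSum_nat_add_iff (f := fun n : ℕ => f (n : ℤ)) 1).mpr h0
    apply h.congr_fun
    intro n
    congr 1
  have hneg : HasSum (fun n : ℕ => f (-((n : ℤ) + 1))) (S - f 0) := by
    apply hshift.congr_fun
    intro n
    simp only [hf]
    have h1 : (-((n : ℤ) + 1)).natAbs = ((n : ℤ) + 1).natAbs := by omega
    have h2 : ((-((n : ℤ) + 1) : ℤ) : ℝ) ^ 2 = (((n : ℤ) + 1 : ℤ) : ℝ) ^ 2 := by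
      push_cast
      ring
    rw [h1, h2]
  have htot := HasSum.of_nat_of_neg_add_one (f := f) hSsum hneg
  have hT2 : T = S + (S - f 0) := hT.unique htot
  have hf0 : f 0 = 1 := by rw [hf]; norm_num
  refine ⟨S, hSsum.congr_fun (fun n => (hfN n)), ?_⟩
  rw [hf0] at hT2
  have : (1 - w) / (1 + w) ≤ 2 * S - 1 := by rw [hT2] at hTle; linarith
  have hw1' : (0:ℝ) < 1 + w := by linarith
  rw [div_le_iff₀ hw1'] at this ⊢
  nlinarith

end ThetaAux

theorem stmt_11 (q : ℝ) (hq₁ : 0 < q) (hq₂ : q < 1) (x : ℝ)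
    (hx : -(q ^ (-(1 / 2) : ℝ)) < x) :
    1 / 2 < theta q x := by
  rcases le_or_gt 0 x with hx0 | hx0
  · -- nonnegative case: theta ≥ 1
    have hsum : Summable (fun n : ℕ => q ^ (n * (n + 1) / 2) * x ^ n) := by
      apply summable_of_ratio_norm_eventually_le (r := 1/2) (by norm_num)
      have htend : Filter.Tendsto (fun n : ℕ => q ^ (n + 1) * x) Filter.atTop (nhds 0) := by
        have h1 : Filter.Tendsto (fun n : ℕ => q ^ (n + 1)) Filter.atTop (nhds 0) := by
          have := tendsto_pow_atTop_nhds_zero_of_lt_one hq₁.le hq₂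
          exact this.comp (Filter.tendsto_add_atTop_nat 1)
        simpa using h1.mul_const x
      filter_upwards [htend.eventually_le_const (by norm_num : (0:ℝ) < 1/2)] with n hn
      have hexp : (n + 1) * (n + 2) / 2 = n * (n + 1) / 2 + (n + 1) := by
        have h2 : 2 ∣ n * (n + 1) := (Nat.even_mul_succ_self n).two_dvd
        have h3 : (n + 1) * (n + 2) = n * (n + 1) + 2 * (n + 1) := by ring
        omega
      have heq : q ^ ((n+1) * (n+1+1) / 2) * x ^ (n+1)
          = (q ^ (n * (n+1) / 2) * x ^ n) * (q ^ (n+1) * x) := by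
        rw [show n + 1 + 1 = n + 2 from rfl, hexp, pow_add, pow_succ]
        ring
      rw [heq, norm_mul]
      have h4 : ‖q ^ (n+1) * x‖ ≤ 1/2 := by
        rw [Real.norm_eq_abs, abs_of_nonneg (by positivity)]
        exact hn
      calc ‖q ^ (n * (n+1) / 2) * x ^ n‖ * ‖q ^ (n+1) * x‖
          ≤ ‖q ^ (n * (n+1) / 2) * x ^ n‖ * (1/2) := by
            apply mul_le_mul_of_nonneg_left h4 (norm_nonneg _)
      _ = 1/2 * ‖q ^ (n * (n+1) / 2) * x ^ n‖ := by ring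
    have h1 : (1:ℝ) ≤ theta q x := by
      have h0 : q ^ (0 * (0 + 1) / 2) * x ^ 0 = 1 := by norm_num
      calc (1:ℝ) = q ^ (0 * (0 + 1) / 2) * x ^ 0 := h0.symm
      _ ≤ theta q x := Summable.le_tsum hsum 0 (fun i _ => by positivity)
    linarith
  · -- negative case
    set p : ℝ := Real.sqrt q with hp
    have hp0 : 0 < p := Real.sqrt_pos.mpr hq₁
    have hp1 : p < 1 := by
      rw [hp]
      rw [show (1:ℝ) = Real.sqrt 1 by simp]
      exact Real.sqrt_lt_sqrt hq₁.le hq₂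
    set a : ℝ := -Real.log p with ha'
    have ha : 0 < a := by
      rw [ha']
      have := Real.log_neg hp0 hp1
      linarith
    set w : ℝ := p * (-x) with hw
    have hw0 : 0 < w := by
      apply mul_pos hp0
      linarith
    have hrw : q ^ (-(1 / 2) : ℝ) = p⁻¹ := by
      rw [Real.rpow_neg hq₁.le, hp, Real.sqrt_eq_rpow]
    have hw1 : w < 1 := by
      rw [hw]
      have h2 : -x < p⁻¹ := by
        rw [← hrw]
        linarith
      have h3 : p * (-x) < p * p⁻¹ := mul_lt_mul_of_pos_left h2 hp0
      rw [mul_inv_cancel₀ hp0.ne'] at h3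
      exact h3
    obtain ⟨S, hSsum, hSle⟩ := ThetaAux.key_nat ha hw0 hw1
    have hterm : ∀ n : ℕ, q ^ (n * (n + 1) / 2) * x ^ n
        = (-1 : ℝ) ^ n * Real.exp (-(a * (n : ℝ) ^ 2)) * w ^ n := by
      intro n
      have hqp : q = p ^ 2 := (Real.sq_sqrt hq₁.le).symm
      have h2 : 2 ∣ n * (n + 1) := (Nat.even_mul_succ_self n).two_dvd
      have hq1 : q ^ (n * (n + 1) / 2) = p ^ (n * (n + 1)) := by
        rw [hqp, ← pow_mul]
        congr 1
        omega
      have hexp : Real.exp (-(a * (n : ℝ) ^ 2)) = p ^ (n ^ 2) := by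
        rw [ha']
        have : -(-Real.log p * (n : ℝ) ^ 2) = ((n ^ 2 : ℕ) : ℝ) * Real.log p := by
          push_cast
          ring
        rw [this, Real.exp_nat_mul, Real.exp_log hp0]
      have hsplit : n * (n + 1) = n ^ 2 + n := by ring
      rw [hq1, hexp, hsplit, pow_add, hw, mul_pow]
      have hxn : x ^ n = (-1 : ℝ) ^ n * (-x) ^ n := by
        rw [← mul_pow]
        norm_num
      rw [hxn]
      ring
    have htheta : theta q x = S := by
      rw [theta]
      rw [tsum_congr hterm]
      exact hSsum.tsum_eq
    rw [htheta]
    have : (1:ℝ)/2 < 1/(1+w) := by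
      rw [div_lt_div_iff₀ (by norm_num) (by linarith)]
      linarith
    linarith
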